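/- Let p ≥ 1, q = exp(πi/(2p+1)), and r an odd integer with gcd(r, 2p+1) = 1. The (p+1)×(p+1) real matrix H with entries H_{ij} = (-1)^{ij} · (2^{ζ(i,j)}/√(2p+1)) · Re(q^{rij}) for 0 ≤ i,j ≤ p, where ζ(i,j) = (2 - δ_{i0} - δ_{j0})/2, is orthogonal. -/

import Mathlib

open Real

lemma full_sum (N : ℕ) (hN : 0 < N) (m : ℤ) :
    ∑ j ∈ Finset.range N, Real.cos (2 * π * m * j / N) =
      if (N:ℤ) ∣ m then (N:ℝ) else 0 := by
  have hN' : (N:ℝ) ≠ 0 := Nat.cast_ne_zero.2 hN.ne'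
  have hNc : (N:ℂ) ≠ 0 := Nat.cast_ne_zero.2 hN.ne'
  have key : ∀ j : ℕ, Real.cos (2 * π * m * j / N)
      = (Complex.exp (((2 * π * m / N : ℝ)) * Complex.I) ^ j).re := by
    intro j
    rw [← Complex.exp_nat_mul]
    have : (j:ℂ) * (((2 * π * m / N : ℝ)) * Complex.I)
        = ((2 * π * m * j / N : ℝ)) * Complex.I := by
      push_cast; ring
    rw [this, Complex.exp_ofReal_mul_I_re]
  simp_rw [key]
  rw [← Complex.re_sum]
  set z := Complex.exp (((2 * π * m / N : ℝ)) * Complex.I) with hz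
  by_cases hdvd : (N:ℤ) ∣ m
  · obtain ⟨k, hk⟩ := hdvd
    have hz1 : z = 1 := by
      rw [hz]
      have : (((2 * π * m / N : ℝ)) : ℂ) * Complex.I = (k:ℤ) * (2 * π * Complex.I) := by
        subst hk; push_cast; field_simp
      rw [this]; exact Complex.exp_int_mul_two_pi_mul_I k
    simp [hz1, hk]
  · have hzN : z ^ N = 1 := by
      rw [hz, ← Complex.exp_nat_mul]
      have : (N:ℂ) * (((2 * π * m / N : ℝ)) * Complex.I) = (m:ℤ) * (2 * π * Complex.I) := by
        push_cast; field_simp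
      rw [this]; exact Complex.exp_int_mul_two_pi_mul_I m
    have hz1 : z ≠ 1 := by
      intro h
      rw [hz, Complex.exp_eq_one_iff] at h
      obtain ⟨n, hn⟩ := h
      apply hdvd
      have hc : ((2 * π * m / N : ℝ) : ℂ) = (((n : ℝ) * (2 * π) : ℝ) : ℂ) := by
        have h2 : ((n:ℂ) * (2 * ↑π * Complex.I)) = (((n:ℝ) * (2*π) : ℝ) : ℂ) * Complex.I := by
          push_cast; ring
        rw [h2] at hn
        exact mul_right_cancel₀ Complex.I_ne_zero hn
      have hr : (2 * π * m / N : ℝ) = (n:ℝ) * (2 * π) := Complex.ofReal_injective hc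
      have h3 : 2 * π * (m:ℝ) = (n:ℝ) * (2 * π) * N := by
        have := congrArg (· * (N:ℝ)) hr
        simpa [div_mul_cancel₀, hN'] using this
      have hm : (m:ℝ) = (N:ℝ) * n := by
        have hpi : (2 * π : ℝ) ≠ 0 := by positivity
        field_simp at h3
        nlinarith [Real.pi_pos]
      exact ⟨n, by exact_mod_cast hm⟩
    have hsum : ∑ j ∈ Finset.range N, z ^ j = 0 := by
      rw [geom_sum_eq hz1, hzN]; simp
    rw [hsum]
    simp [hdvd]


lemma half_sum (N p : ℕ) (hN : N = 2*p+1) (m : ℤ) :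
    2 * ∑ j ∈ Finset.range (p+1), Real.cos (2 * π * m * j / N) =
      (∑ j ∈ Finset.range N, Real.cos (2 * π * m * j / N)) + 1 := by
  set f : ℕ → ℝ := fun j => Real.cos (2 * π * m * j / N) with hf
  have hN0 : (N:ℝ) ≠ 0 := by rw [hN]; positivity
  have h1 : N - (p+1) = p := by omega
  have h2 : ∑ i ∈ Finset.Ico (p+1) N, f i = ∑ t ∈ Finset.range p, f (p+1+t) := by
    rw [Finset.sum_Ico_eq_sum_range, h1]
  have hsplit : ∑ j ∈ Finset.range N, f j
      = ∑ j ∈ Finset.range (p+1), f j + ∑ t ∈ Finset.range p, f (p+1+t) := by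
    rw [Finset.range_eq_Ico, ← Finset.sum_Ico_consecutive _ (Nat.zero_le (p+1))
      (by omega : p+1 ≤ N), h2, ← Finset.range_eq_Ico]
  have hrefl : ∀ t ∈ Finset.range p, f (p+1+t) = f (p - t) := by
    intro t ht
    rw [Finset.mem_range] at ht
    have hc : ((p - t : ℕ) : ℝ) = (p:ℝ) - t := by
      have : t ≤ p := ht.le
      push_cast [this]; ring
    have harg : 2 * π * m * ((p+1+t : ℕ) : ℝ) / N
        = (m : ℤ) * (2*π) - 2 * π * m * ((p - t : ℕ) : ℝ) / N := by
      rw [hc, eq_sub_iff_add_eq, ← add_div]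
      rw [show 2*π*(m:ℝ)*(((p+1+t : ℕ)):ℝ) + 2*π*(m:ℝ)*((p:ℝ)-(t:ℝ)) = ((m:ℤ):ℝ)*(2*π)*(N:ℝ) by
        push_cast [hN]; ring]
      rw [mul_div_assoc, div_self hN0, mul_one]
    rw [hf]
    simp only
    rw [harg, Real.cos_int_mul_two_pi_sub]
  rw [Finset.sum_congr rfl hrefl] at hsplit
  have hrev : ∑ t ∈ Finset.range p, f (p - t) = ∑ t ∈ Finset.range p, f (t+1) := by
    have := Finset.sum_range_reflect (fun t => f (t+1)) p
    rw [← this]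
    apply Finset.sum_congr rfl
    intro t ht
    rw [Finset.mem_range] at ht
    congr 1
    omega
  rw [hrev] at hsplit
  have hsucc : ∑ j ∈ Finset.range (p+1), f j = (∑ t ∈ Finset.range p, f (t+1)) + f 0 :=
    Finset.sum_range_succ' f p
  rw [hsplit, hsucc, show f 0 = 1 by simp [hf]]
  ring

theorem H_matrix_orthogonal (p : ℕ) (hp : 1 ≤ p) (r : ℤ) (hr : Odd r)
    (hcop : Int.gcd r (2 * p + 1) = 1) :
    let H : Matrix (Fin (p + 1)) (Fin (p + 1)) ℝ := fun i j =>
      (-1 : ℝ) ^ ((i : ℕ) * (j : ℕ)) *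
        (Real.sqrt 2 ^ (2 - (if (i : ℕ) = 0 then 1 else 0)
            - (if (j : ℕ) = 0 then 1 else 0)) / Real.sqrt (2 * p + 1)) *
        Real.cos (Real.pi * r * (i : ℕ) * (j : ℕ) / (2 * p + 1))
    H * H.transpose = 1 := by
  intro H
  set D : ℝ := 2 * (p:ℝ) + 1 with hD
  have hDpos : (0:ℝ) < D := by positivity
  have hD0 : D ≠ 0 := ne_of_gt hDpos
  have hDN : ((2*p+1 : ℕ) : ℝ) = D := by push_cast [hD]; ring
  -- the half-integer s
  obtain ⟨s, hs⟩ : ∃ s : ℤ, r + (2*(p:ℤ)+1) = 2*s := by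
    rcases hr with ⟨t, ht⟩
    exact ⟨t + p + 1, by omega⟩
  -- coprimality of s and N
  have hcops : IsCoprime ((2*(p:ℤ)+1)) s := by
    have h1 : IsCoprime r (2*(p:ℤ)+1) := Int.isCoprime_iff_gcd_eq_one.mpr hcop
    have h2 : IsCoprime (r + (2*(p:ℤ)+1) * 1) (2*(p:ℤ)+1) := h1.add_mul_left_left 1
    rw [mul_one, hs] at h2
    exact h2.of_mul_left_right.symm
  have hdvd : ∀ x : ℤ, (2*(p:ℤ)+1) ∣ s * x → (2*(p:ℤ)+1) ∣ x := fun x h =>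
    hcops.dvd_of_dvd_mul_left h
  -- weight function
  set c : ℕ → ℝ := fun n => if n = 0 then 1 else Real.sqrt 2 with hc
  have hc2 : Real.sqrt 2 * Real.sqrt 2 = 2 := Real.mul_self_sqrt (by norm_num)
  -- entry formula
  have hHform : ∀ a b : Fin (p+1), H a b
      = (c (a:ℕ) * c (b:ℕ) / Real.sqrt D) * Real.cos (2 * π * (s:ℝ) * (a:ℕ) * (b:ℕ) / D) := by
    intro a b
    have hpow : (Real.sqrt 2) ^ (2 - (if (a:ℕ) = 0 then 1 else 0)
        - (if (b:ℕ) = 0 then 1 else 0)) = c (a:ℕ) * c (b:ℕ) := by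
      rw [hc]
      by_cases ha : (a:ℕ) = 0 <;> by_cases hb : (b:ℕ) = 0 <;>
        simp [ha, hb, pow_two, hc2]
    have h2s : (2:ℝ) * (s:ℝ) = (r:ℝ) + D := by
      rw [hD]; exact_mod_cast congrArg (Int.cast : ℤ → ℝ) hs.symm
    have harg : 2 * π * (s:ℝ) * (a:ℕ) * (b:ℕ) / D
        = π * r * (a:ℕ) * (b:ℕ) / D + ((a:ℕ) * (b:ℕ) : ℕ) * π := by
      rw [div_add' _ _ _ hD0]
      congr 1
      push_cast
      linear_combination (π * ((a:ℕ):ℝ) * ((b:ℕ):ℝ)) * h2s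
    have hsign : Real.cos (2 * π * (s:ℝ) * (a:ℕ) * (b:ℕ) / D)
        = (-1:ℝ) ^ ((a:ℕ) * (b:ℕ)) * Real.cos (π * r * (a:ℕ) * (b:ℕ) / D) := by
      rw [harg, Real.cos_add_nat_mul_pi]
    show (-1 : ℝ) ^ ((a:ℕ) * (b:ℕ)) *
        ((Real.sqrt 2) ^ (2 - (if (a:ℕ) = 0 then 1 else 0) - (if (b:ℕ) = 0 then 1 else 0))
          / Real.sqrt (2 * (p:ℝ) + 1)) *
        Real.cos (π * r * (a:ℕ) * (b:ℕ) / (2 * (p:ℝ) + 1)) = _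
    rw [hpow, hsign, ← hD]
    have : ((-1:ℝ) ^ ((a:ℕ)*(b:ℕ)))^2 = 1 := by
      rw [← pow_mul, mul_comm ((a:ℕ)*(b:ℕ)) 2, pow_mul]; norm_num
    nlinarith [this]
  ext i k
  rw [Matrix.mul_apply]
  simp only [Matrix.transpose_apply]
  have hsq : Real.sqrt D * Real.sqrt D = D := Real.mul_self_sqrt hDpos.le
  set m1 : ℤ := s * (((i:ℕ):ℤ) - ((k:ℕ):ℤ)) with hm1
  set m2 : ℤ := s * (((i:ℕ):ℤ) + ((k:ℕ):ℤ)) with hm2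
  set g : ℕ → ℝ := fun j => Real.cos (2 * π * (s:ℝ) * (i:ℕ) * j / D)
      * Real.cos (2 * π * (s:ℝ) * (k:ℕ) * j / D) with hg
  have hterm : ∀ j : Fin (p+1), H i j * H k j
      = (c (i:ℕ) * c (k:ℕ) / D) * (c (j:ℕ) * c (j:ℕ) * g (j:ℕ)) := by
    intro j
    rw [hHform i j, hHform k j, hg]
    simp only
    calc (c (i:ℕ) * c (j:ℕ) / Real.sqrt D * Real.cos (2 * π * (s:ℝ) * (i:ℕ) * (j:ℕ) / D))
          * (c (k:ℕ) * c (j:ℕ) / Real.sqrt D * Real.cos (2 * π * (s:ℝ) * (k:ℕ) * (j:ℕ) / D))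
        = (c (i:ℕ) * c (k:ℕ)) * (c (j:ℕ) * c (j:ℕ)
            * (Real.cos (2 * π * (s:ℝ) * (i:ℕ) * (j:ℕ) / D)
              * Real.cos (2 * π * (s:ℝ) * (k:ℕ) * (j:ℕ) / D))) / (Real.sqrt D * Real.sqrt D) := by
          ring
      _ = _ := by rw [hsq]; ring
  rw [Finset.sum_congr rfl (fun j _ => hterm j), ← Finset.mul_sum]
  have hfin : ∑ j : Fin (p+1), (c (j:ℕ) * c (j:ℕ) * g (j:ℕ))
      = ∑ j ∈ Finset.range (p+1), (c j * c j * g j) :=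
    Fin.sum_univ_eq_sum_range (fun j => c j * c j * g j) (p+1)
  rw [hfin]
  -- product-to-sum
  have hprod : ∀ j : ℕ, 2 * g j
      = Real.cos (2 * π * (m1:ℝ) * j / D) + Real.cos (2 * π * (m2:ℝ) * j / D) := by
    intro j
    have hA : 2 * π * (m1:ℝ) * j / D
        = 2 * π * (s:ℝ) * (i:ℕ) * j / D - 2 * π * (s:ℝ) * (k:ℕ) * j / D := by
      rw [hm1]; push_cast; ring
    have hB : 2 * π * (m2:ℝ) * j / D
        = 2 * π * (s:ℝ) * (i:ℕ) * j / D + 2 * π * (s:ℝ) * (k:ℕ) * j / D := by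
      rw [hm2]; push_cast; ring
    rw [hA, hB, Real.cos_sub, Real.cos_add, hg]
    ring
  have hsum_c : ∑ j ∈ Finset.range (p+1), (c j * c j * g j)
      = ∑ j ∈ Finset.range (p+1), ((Real.cos (2 * π * (m1:ℝ) * j / D)
          + Real.cos (2 * π * (m2:ℝ) * j / D)) - (if j = 0 then 1 else 0)) := by
    apply Finset.sum_congr rfl
    intro j _
    by_cases hj : j = 0
    · subst hj
      have hg0 : g 0 = 1 := by simp [hg]
      have := hprod 0
      rw [hg0] at this
      simp [hc, hg0, ← this]
    · have hcj : c j * c j = 2 := by simp [hc, hj, hc2]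
      rw [hcj, ← hprod j]
      simp [hj]
  rw [hsum_c, Finset.sum_sub_distrib, Finset.sum_add_distrib]
  have hione : ∑ j ∈ Finset.range (p+1), (if j = 0 then (1:ℝ) else 0) = 1 := by
    rw [Finset.sum_ite_eq' (Finset.range (p+1)) 0 (fun _ => (1:ℝ))]
    simp
  rw [hione]
  -- apply half_sum and full_sum
  have hcast : ((2*p+1 : ℕ) : ℤ) = 2*(p:ℤ)+1 := by push_cast; ring
  have hNpos : 0 < 2*p+1 := by omega
  have key : ∀ m : ℤ, ∑ j ∈ Finset.range (p+1), Real.cos (2 * π * (m:ℝ) * j / D)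
      = ((if (2*(p:ℤ)+1) ∣ m then D else 0) + 1) / 2 := by
    intro m
    have h1 := half_sum (2*p+1) p rfl m
    have h2 := full_sum (2*p+1) hNpos m
    rw [h2, hcast] at h1
    simp only [hDN] at h1
    linarith
  rw [key m1, key m2]
  -- now case analysis
  rw [Matrix.one_apply]
  by_cases hik : i = k
  · subst hik
    have hd1 : (2*(p:ℤ)+1) ∣ m1 := by rw [hm1]; simp
    rw [if_pos rfl, if_pos hd1]
    by_cases hi0 : (i:ℕ) = 0
    · have hd2 : (2*(p:ℤ)+1) ∣ m2 := by rw [hm2, hi0]; simp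
      rw [if_pos hd2]
      rw [hc]
      simp only [hi0, if_pos rfl]
      field_simp
      simp only [if_true]
      ring
    · have hd2 : ¬ (2*(p:ℤ)+1) ∣ m2 := by
        intro h
        have h' := hdvd _ h
        have hile : (i:ℕ) ≤ p := Nat.lt_succ_iff.mp i.isLt
        have : ((i:ℕ):ℤ) + ((i:ℕ):ℤ) = 0 := by
          refine Int.eq_zero_of_abs_lt_dvd h' ?_
          have : ((i:ℕ):ℤ) ≤ p := by exact_mod_cast hile
          rw [abs_of_nonneg (by positivity)]
          omega
        omega
      rw [if_neg hd2]
      have hci : c (i:ℕ) = Real.sqrt 2 := by simp [hc, hi0]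
      rw [hci, hc2]
      field_simp
      ring
  · have hineq : ((i:ℕ):ℤ) ≠ ((k:ℕ):ℤ) := by
      intro h
      exact hik (Fin.ext (by exact_mod_cast h))
    have hile : (i:ℕ) ≤ p := Nat.lt_succ_iff.mp i.isLt
    have hkle : (k:ℕ) ≤ p := Nat.lt_succ_iff.mp k.isLt
    have hile' : ((i:ℕ):ℤ) ≤ p := by exact_mod_cast hile
    have hkle' : ((k:ℕ):ℤ) ≤ p := by exact_mod_cast hkle
    have hd1 : ¬ (2*(p:ℤ)+1) ∣ m1 := by
      intro h
      have h' := hdvd _ h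
      have : ((i:ℕ):ℤ) - ((k:ℕ):ℤ) = 0 := by
        refine Int.eq_zero_of_abs_lt_dvd h' ?_
        rw [abs_sub_lt_iff]
        constructor <;> omega
      omega
    have hd2 : ¬ (2*(p:ℤ)+1) ∣ m2 := by
      intro h
      have h' := hdvd _ h
      have h0 : ((i:ℕ):ℤ) + ((k:ℕ):ℤ) = 0 := by
        refine Int.eq_zero_of_abs_lt_dvd h' ?_
        rw [abs_of_nonneg (by positivity)]
        omega
      have : ((i:ℕ):ℤ) = 0 ∧ ((k:ℕ):ℤ) = 0 := by omega
      exact hineq (by omega)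
    rw [if_neg hd1, if_neg hd2, if_neg hik]
    ring
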